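/- Let n ≥ 1 and let u : {1,…,n} × {1,2,…} → ℚ satisfy u(1,1) = 1, u(i,1) = 0 for 2 ≤ i ≤ n, and for p ≥ 2: u(1,p) = p + u(n,p−1) and u(i,p) = ((p+1)/p)·u(i−1,p−1) for 2 ≤ i ≤ n. Then for every p ≥ 1: |Σ_{i=1}^n u(i,p) − np²/(n+1)| ≤ n(2p+n); in particular the expected utilitarian social welfare of the strictly alternating policy equals np²/(n+1) + O(p) for fixed n. -/

import Mathlib

open Finset

set_option maxHeartbeats 1000000 in
/-- Let `n ≥ 1` and let `u : {1,…,n} × {1,2,…} → ℚ` satisfy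
`u(1,1) = 1`, `u(i,1) = 0` for `2 ≤ i ≤ n`, and for `p ≥ 2`:
`u(1,p) = p + u(n,p−1)` and `u(i,p) = ((p+1)/p)·u(i−1,p−1)` for `2 ≤ i ≤ n`
(these are the expected Borda utilities under the strictly alternating policy
`123…n123…n…`).  Then for every `p ≥ 1`:
`|Σ_{i=1}^n u(i,p) − np²/(n+1)| ≤ n(2p+n)`; in particular the expected
utilitarian social welfare of the strictly alternating policy is
`np²/(n+1) + O(p)` for fixed `n`. -/
theorem stmt17 (n : ℕ) (hn : 1 ≤ n) (u : ℕ → ℕ → ℚ)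
    (h11 : u 1 1 = 1)
    (hi1 : ∀ i : ℕ, 2 ≤ i → i ≤ n → u i 1 = 0)
    (hrec1 : ∀ p : ℕ, 2 ≤ p → u 1 p = (p : ℚ) + u n (p - 1))
    (hreci : ∀ i p : ℕ, 2 ≤ i → i ≤ n → 2 ≤ p →
      u i p = (((p : ℚ) + 1) / (p : ℚ)) * u (i - 1) (p - 1)) :
    ∀ p : ℕ, 1 ≤ p →
      |(∑ i ∈ Finset.Icc 1 n, u i p) - (n : ℚ) * (p : ℚ) ^ 2 / ((n : ℚ) + 1)|
        ≤ (n : ℚ) * (2 * (p : ℚ) + (n : ℚ)) := by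
  -- u i p = 0 when p < i
  have hzero : ∀ p : ℕ, 1 ≤ p → ∀ i : ℕ, 2 ≤ i → i ≤ n → p < i → u i p = 0 := by
    intro p
    induction p with
    | zero => omega
    | succ p ih =>
      intro _ i h2 hin hpi
      rcases Nat.lt_or_ge p 1 with h | h
      · interval_cases p
        exact hi1 i h2 hin
      · rw [hreci i (p+1) h2 hin (by omega)]
        have h0 : u (i-1) ((p+1)-1) = 0 := by
          simpa using ih h (i-1) (by omega) (by omega) (by omega)
        rw [h0, mul_zero]
  -- diagonal propagation
  have hdiag : ∀ i : ℕ, 1 ≤ i → i ≤ n → ∀ m : ℕ, 1 ≤ m →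
      u i (i + m - 1) = (((i : ℚ) + (m : ℚ)) / ((m : ℚ) + 1)) * u 1 m := by
    intro i
    induction i with
    | zero => omega
    | succ i ih =>
      intro _ hin m hm
      rcases Nat.lt_or_ge i 1 with h | h
      · interval_cases i
        have hm0 : (0 : ℚ) < (m : ℚ) + 1 := by positivity
        rw [show 1 + m - 1 = m from by omega]
        rw [show ((1:ℕ) : ℚ) + (m:ℚ) = (m:ℚ) + 1 from by push_cast; ring]
        rw [div_self (ne_of_gt hm0), one_mul]
      · have hp2 : 2 ≤ i + m := by omega
        have step := hreci (i+1) (i+m) (by omega) hin hp2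
        rw [show i + 1 + m - 1 = i + m from by omega]
        rw [step]
        rw [show (i+1) - 1 = i from by omega, show (i+m) - 1 = i + m - 1 from rfl]
        rw [ih h (by omega) m hm]
        have him : (0 : ℚ) < ((i:ℚ) + (m:ℚ)) := by
          have : (0:ℚ) < ((i+m : ℕ) : ℚ) := by exact_mod_cast Nat.pos_of_ne_zero (by omega)
          push_cast at this; linarith
        have hm0 : (0 : ℚ) < (m : ℚ) + 1 := by positivity
        push_cast
        field_simp
        ring
  -- main bound on u 1 q
  have hC : ∀ q : ℕ, 1 ≤ q →
      (q : ℚ) * ((q:ℚ) + 1) / ((n:ℚ) + 1) ≤ u 1 q ∧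
      u 1 q ≤ (q : ℚ) * ((q:ℚ) + 1) / ((n:ℚ) + 1) + ((q:ℚ) + 1) := by
    intro q
    induction q using Nat.strong_induction_on with
    | _ q ih =>
      intro hq
      have hN1 : (0:ℚ) < (n:ℚ) + 1 := by positivity
      rcases le_or_gt q n with hqn | hqn
      · -- base: u 1 q = q
        have hval : u 1 q = (q : ℚ) := by
          rcases Nat.lt_or_ge q 2 with h | h
          · interval_cases q
            · simpa using h11
          · rw [hrec1 q h]
            have : u n (q - 1) = 0 :=
              hzero (q-1) (by omega) n (by omega) le_rfl (by omega)
            rw [this, add_zero]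
        rw [hval]
        have hq1 : (1:ℚ) ≤ (q:ℚ) := by exact_mod_cast hq
        have hqn' : (q:ℚ) ≤ (n:ℚ) := by exact_mod_cast hqn
        constructor
        · rw [div_le_iff₀ hN1]; nlinarith
        · have : (0:ℚ) ≤ (q:ℚ) * ((q:ℚ)+1) / ((n:ℚ)+1) := by positivity
          linarith
      · -- step: q > n
        set m := q - n with hm_def
        have hm1 : 1 ≤ m := by omega
        have hmq : m < q := by omega
        have hqnm : q = n + m := by omega
        have h1 : u 1 q = (q:ℚ) + u n (q - 1) := hrec1 q (by omega)
        have h2 : u n (q - 1) = (((n:ℚ) + (m:ℚ)) / ((m:ℚ) + 1)) * u 1 m := by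
          have := hdiag n hn le_rfl m hm1
          rwa [show n + m - 1 = q - 1 from by omega] at this
        have hQ : (q:ℚ) = (n:ℚ) + (m:ℚ) := by exact_mod_cast hqnm
        obtain ⟨hl, hu⟩ := ih m hmq hm1
        have hM1 : (0:ℚ) < (m:ℚ) + 1 := by positivity
        have hQpos : (0:ℚ) < (q:ℚ) := by
          have : (1:ℚ) ≤ (q:ℚ) := by exact_mod_cast hq
          linarith
        set x := u 1 m with hx_def
        have hy : u 1 q * ((m:ℚ)+1) = (q:ℚ)*((m:ℚ)+1) + (q:ℚ) * x := by
          rw [h1, h2, ← hQ]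
          field_simp
        have hl' : (m:ℚ)*((m:ℚ)+1) ≤ x*((n:ℚ)+1) := by
          rw [div_le_iff₀ hN1] at hl; linarith
        have hu' : x*((n:ℚ)+1) ≤ (m:ℚ)*((m:ℚ)+1) + ((m:ℚ)+1)*((n:ℚ)+1) := by
          have h := mul_le_mul_of_nonneg_right hu hN1.le
          rw [add_mul, div_mul_cancel₀ _ (ne_of_gt hN1)] at h
          linarith
        have hMnn : (0:ℚ) ≤ (m:ℚ) := by positivity
        have hNnn : (0:ℚ) ≤ (n:ℚ) := by positivity
        constructor
        · rw [div_le_iff₀ hN1]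
          have goal' : (q:ℚ)*((q:ℚ)+1)*((m:ℚ)+1) ≤ (u 1 q * ((n:ℚ)+1)) * ((m:ℚ)+1) := by
            have h5 : u 1 q * ((n:ℚ)+1) * ((m:ℚ)+1) = ((q:ℚ)*((m:ℚ)+1) + (q:ℚ)*x)*((n:ℚ)+1) := by
              rw [mul_right_comm, hy]
            rw [h5, hQ]
            nlinarith [mul_le_mul_of_nonneg_left hl' hQpos.le, hQ]
          exact le_of_mul_le_mul_right goal' hM1
        · have main : u 1 q * ((n:ℚ)+1) ≤ (q:ℚ)*((q:ℚ)+1) + ((q:ℚ)+1)*((n:ℚ)+1) := by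
            have goal' : (u 1 q * ((n:ℚ)+1)) * ((m:ℚ)+1)
                ≤ ((q:ℚ)*((q:ℚ)+1) + ((q:ℚ)+1)*((n:ℚ)+1)) * ((m:ℚ)+1) := by
              have h5 : u 1 q * ((n:ℚ)+1) * ((m:ℚ)+1) = ((q:ℚ)*((m:ℚ)+1) + (q:ℚ)*x)*((n:ℚ)+1) := by
                rw [mul_right_comm, hy]
              rw [h5, hQ]
              nlinarith [mul_le_mul_of_nonneg_left hu' hQpos.le, hQ]
            exact le_of_mul_le_mul_right goal' hM1
          have hsplit : ((q:ℚ)*((q:ℚ)+1) + ((q:ℚ)+1)*((n:ℚ)+1))/((n:ℚ)+1)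
              = (q:ℚ)*((q:ℚ)+1)/((n:ℚ)+1) + ((q:ℚ)+1) := by
            field_simp
          have := (le_div_iff₀ hN1).mpr main
          rw [hsplit] at this
          exact this
  -- per-term bound
  intro p hp
  have hN1 : (0:ℚ) < (n:ℚ) + 1 := by positivity
  have hP1 : (1:ℚ) ≤ (p:ℚ) := by exact_mod_cast hp
  have hNn : (1:ℚ) ≤ (n:ℚ) := by exact_mod_cast hn
  have hterm : ∀ i ∈ Finset.Icc 1 n,
      |u i p - (p:ℚ)^2/((n:ℚ)+1)| ≤ 2*(p:ℚ) + (n:ℚ) := by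
    intro i hi
    rw [Finset.mem_Icc] at hi
    obtain ⟨hi1', hin⟩ := hi
    have hI1 : (1:ℚ) ≤ (i:ℚ) := by exact_mod_cast hi1'
    have hIN : (i:ℚ) ≤ (n:ℚ) := by exact_mod_cast hin
    rcases Nat.lt_or_ge p i with hpi | hip
    · -- u i p = 0, and p < i ≤ n
      have h0 : u i p = 0 := hzero p hp i (by omega) hin hpi
      have hPN : (p:ℚ) ≤ (n:ℚ) := by exact_mod_cast (by omega : p ≤ n)
      rw [h0, zero_sub, abs_neg, abs_of_nonneg (by positivity)]
      rw [div_le_iff₀ hN1]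
      nlinarith
    · -- i ≤ p : diagonal
      set m := p - i + 1 with hm_def
      have hm1 : 1 ≤ m := by omega
      have hmi : i + m - 1 = p := by omega
      have hmip : m + i = p + 1 := by omega
      have hMI : (m:ℚ) + (i:ℚ) = (p:ℚ) + 1 := by exact_mod_cast hmip
      have hval : u i p = (((p:ℚ) + 1) / ((m:ℚ) + 1)) * u 1 m := by
        have := hdiag i hi1' hin m hm1
        rw [hmi] at this
        rw [this, show (i:ℚ) + (m:ℚ) = (p:ℚ) + 1 from by linarith]
      obtain ⟨hl, hu⟩ := hC m hm1
      have hM1 : (0:ℚ) < (m:ℚ) + 1 := by positivity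
      have hPpos : (0:ℚ) < (p:ℚ) + 1 := by linarith
      have hdivpos : (0:ℚ) ≤ ((p:ℚ)+1)/((m:ℚ)+1) := by positivity
      have hMle : (m:ℚ) ≤ (p:ℚ) := by
        have : m ≤ p := by omega
        exact_mod_cast this
      have hL : ((p:ℚ)+1)*(m:ℚ)/((n:ℚ)+1) ≤ u i p := by
        have e1 := mul_le_mul_of_nonneg_left hl hdivpos
        have e2 : ((p:ℚ)+1)/((m:ℚ)+1) * ((m:ℚ)*((m:ℚ)+1)/((n:ℚ)+1)) =
            ((p:ℚ)+1)*(m:ℚ)/((n:ℚ)+1) := by field_simp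
        rw [hval]
        linarith [e1, e2]
      have hU : u i p ≤ ((p:ℚ)+1)*(m:ℚ)/((n:ℚ)+1) + ((p:ℚ)+1) := by
        have e1 := mul_le_mul_of_nonneg_left hu hdivpos
        have e2 : ((p:ℚ)+1)/((m:ℚ)+1) * ((m:ℚ)*((m:ℚ)+1)/((n:ℚ)+1) + ((m:ℚ)+1)) =
            ((p:ℚ)+1)*(m:ℚ)/((n:ℚ)+1) + ((p:ℚ)+1) := by field_simp
        rw [hval]
        linarith [e1, e2]
      rw [abs_le]
      have hML : ((p:ℚ)+1)*(m:ℚ)/((n:ℚ)+1) ≤ ((p:ℚ)+1)*(p:ℚ)/((n:ℚ)+1) := by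
        gcongr <;> linarith
      have hMG : ((p:ℚ)+1)*((p:ℚ)+1-(n:ℚ))/((n:ℚ)+1) ≤ ((p:ℚ)+1)*(m:ℚ)/((n:ℚ)+1) := by
        gcongr <;> linarith
      have d1 : ((p:ℚ)+1)*(p:ℚ)/((n:ℚ)+1) - (p:ℚ)^2/((n:ℚ)+1) = (p:ℚ)/((n:ℚ)+1) := by
        rw [div_sub_div_same]; congr 1; ring
      have d2 : (p:ℚ)/((n:ℚ)+1) ≤ (p:ℚ) := by
        rw [div_le_iff₀ hN1]; nlinarith
      have d3 : (p:ℚ)^2/((n:ℚ)+1) - ((p:ℚ)+1)*((p:ℚ)+1-(n:ℚ))/((n:ℚ)+1)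
          = ((n:ℚ)*((p:ℚ)+1) - 2*(p:ℚ) - 1)/((n:ℚ)+1) := by
        rw [div_sub_div_same]; congr 1; ring
      have d4 : ((n:ℚ)*((p:ℚ)+1) - 2*(p:ℚ) - 1)/((n:ℚ)+1) ≤ 2*(p:ℚ)+(n:ℚ) := by
        rw [div_le_iff₀ hN1]; nlinarith
      constructor
      · linarith [hL, hMG, d3, d4]
      · linarith [hU, hML, d1, d2]
  -- sum up
  have hcard : (Finset.Icc 1 n).card = n := by
    rw [Nat.card_Icc]; omega
  have hsplit : (∑ i ∈ Finset.Icc 1 n, u i p) - (n : ℚ) * (p : ℚ) ^ 2 / ((n : ℚ) + 1)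
      = ∑ i ∈ Finset.Icc 1 n, (u i p - (p:ℚ)^2/((n:ℚ)+1)) := by
    rw [Finset.sum_sub_distrib, Finset.sum_const, hcard, nsmul_eq_mul]
    ring
  rw [hsplit]
  calc |∑ i ∈ Finset.Icc 1 n, (u i p - (p:ℚ)^2/((n:ℚ)+1))|
      ≤ ∑ i ∈ Finset.Icc 1 n, |u i p - (p:ℚ)^2/((n:ℚ)+1)| :=
        Finset.abs_sum_le_sum_abs _ _
    _ ≤ ∑ _i ∈ Finset.Icc 1 n, (2*(p:ℚ) + (n:ℚ)) := Finset.sum_le_sum hterm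
    _ = (n : ℚ) * (2 * (p : ℚ) + (n : ℚ)) := by
        rw [Finset.sum_const, hcard, nsmul_eq_mul]
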